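/- Let (π_0, …, π_{c−1}) be a price cycle that equals the concatenation, for t = 0, …, d−1 in order, of k_t consecutive copies of ρ_t, where d ≥ 1, ρ_0, …, ρ_{d−1} ∈ P, each k_t ∈ {1, ℓ}, and k_t = 1 implies ρ_t ≤ ρ_{(t−1) mod d}. Then for every t ∈ {0, …, d−1}, the last position of the block of copies of ρ_t is a reset point of the cycle; moreover, if k_t = ℓ and ρ_t ≤ ρ_{(t−1) mod d}, then all ℓ positions of the block of copies of ρ_t are reset points. -/

import Mathlib

lemma lenFlat (f : ℕ → List ℝ) (dd : ℕ) :
    ((List.range dd).flatMap f).length = ∑ s ∈ Finset.range dd, (f s).length := by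
  induction dd with
  | zero => simp
  | succ n ih => rw [List.range_succ, List.flatMap_append, Finset.sum_range_succ, ← ih]; simp

lemma getD_flatMap_range (f : ℕ → List ℝ) :
    ∀ dd t, t < dd → ∀ i, i < (f t).length →
    ((List.range dd).flatMap f).getD ((∑ s ∈ Finset.range t, (f s).length) + i) 0
      = (f t).getD i 0 := by
  intro dd
  induction dd with
  | zero => omega
  | succ n ih =>
    intro t ht i hi
    rw [List.range_succ, List.flatMap_append]
    rcases Nat.lt_or_ge t n with h | h
    · have hlt : (∑ s ∈ Finset.range t, (f s).length) + i < ((List.range n).flatMap f).length := by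
        rw [lenFlat]
        have h1 : (∑ s ∈ Finset.range t, (f s).length) + (f t).length
            = ∑ s ∈ Finset.range (t+1), (f s).length := (Finset.sum_range_succ _ t).symm
        have h2 : ∑ s ∈ Finset.range (t+1), (f s).length ≤ ∑ s ∈ Finset.range n, (f s).length :=
          Finset.sum_le_sum_of_subset (Finset.range_subset_range.mpr h)
        omega
      rw [List.getD_append _ _ _ _ hlt]
      exact ih t h i hi
    · have ht' : t = n := by omega
      subst ht'
      have hlen : ((List.range t).flatMap f).length = ∑ s ∈ Finset.range t, (f s).length :=
        lenFlat f t
      rw [List.getD_append_right _ _ _ _ (by omega)]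
      rw [hlen]
      simp [Nat.add_sub_cancel_left]

/-- Entry of a price cycle at (cyclic) position `t`. -/
noncomputable def cycEntry (L : List ℝ) (t : ℕ) : ℝ := L.getD (t % L.length) 0

/-- Reference at position `t`: minimum of the `ℓ` cyclically preceding entries. -/
noncomputable def cycRef (ℓ : ℕ) (hℓ : 0 < ℓ) (L : List ℝ) (t : ℕ) : ℝ :=
  (Finset.range ℓ).inf' (Finset.nonempty_range_iff.mpr hℓ.ne') fun j =>
    cycEntry L (t + L.length * ℓ - (j + 1))

/-- Objective value of a price cycle. -/
noncomputable def cycObj (g : ℝ → ℝ → ℝ) (ℓ : ℕ) (hℓ : 0 < ℓ) (L : List ℝ) : ℝ :=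
  (∑ t ∈ Finset.range L.length, g (cycRef ℓ hℓ L t) (cycEntry L t)) / L.length

def RefMonotone (P : Finset ℝ) (g : ℝ → ℝ → ℝ) : Prop :=
  ∀ p ∈ P, ∀ r ∈ P, ∀ r' ∈ P, r ≤ r' → g r p ≤ g r' p

noncomputable def genK (ℓ : ℕ) (R : List ℝ) (t : ℕ) : ℕ :=
  if R.getD ((t + R.length - 1) % R.length) 0 < R.getD t 0 then ℓ else 1

noncomputable def inducedCycle (ℓ : ℕ) (R : List ℝ) : List ℝ :=
  (List.range R.length).flatMap fun t => List.replicate (genK ℓ R t) (R.getD t 0)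

def IsResetPoint (ℓ : ℕ) (hℓ : 0 < ℓ) (L : List ℝ) (t : ℕ) : Prop :=
  cycEntry L t = (Finset.range ℓ).inf' (Finset.nonempty_range_iff.mpr hℓ.ne') fun j =>
    cycEntry L (t + L.length * ℓ - j)

/-- in a cycle built by concatenating, for `t = 0, …, d−1`, `k t`
copies of `ρ t` with `k t ∈ {1, ℓ}` and `k t = 1 → ρ t ≤ ρ ((t−1) mod d)`, the
last position of each block is a reset point; moreover if `k t = ℓ` and
`ρ t ≤ ρ ((t−1) mod d)` then all `ℓ` positions of the block are reset points. -/
theorem stmt9 (P : Finset ℝ) (hP : P.Nonempty) (ℓ : ℕ) (hℓ : 0 < ℓ)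
    (d : ℕ) (hd : 0 < d) (ρ : ℕ → ℝ) (k : ℕ → ℕ)
    (hρP : ∀ t < d, ρ t ∈ P)
    (hk : ∀ t < d, k t = 1 ∨ k t = ℓ)
    (hdown : ∀ t < d, k t = 1 → ρ t ≤ ρ ((t + d - 1) % d)) :
    ∀ t < d,
      IsResetPoint ℓ hℓ ((List.range d).flatMap fun s => List.replicate (k s) (ρ s))
        ((∑ s ∈ Finset.range (t + 1), k s) - 1) ∧
      (k t = ℓ → ρ t ≤ ρ ((t + d - 1) % d) →
        ∀ i < ℓ,
          IsResetPoint ℓ hℓ ((List.range d).flatMap fun s => List.replicate (k s) (ρ s))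
            ((∑ s ∈ Finset.range t, k s) + i)) := by
  set L := (List.range d).flatMap fun s => List.replicate (k s) (ρ s) with hLdef
  set n := L.length with hn
  have hkpos : ∀ t < d, 0 < k t := by
    intro t ht; rcases hk t ht with h | h <;> omega
  have hlen : n = ∑ s ∈ Finset.range d, k s := by
    rw [hn, hLdef, lenFlat]; simp
  have hSle : ∀ t, t ≤ d → ∑ s ∈ Finset.range t, k s ≤ n := by
    intro t ht
    rw [hlen]
    exact Finset.sum_le_sum_of_subset (Finset.range_subset_range.mpr ht)
  have hnpos : 0 < n := by
    have h1 : 0 < k 0 := hkpos 0 hd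
    have h2 : k 0 = ∑ s ∈ Finset.range 1, k s := by simp
    have := hSle 1 hd
    omega
  have hA : ℓ ≤ n * ℓ := Nat.le_mul_of_pos_left ℓ hnpos
  have hE : ∀ t < d, ∀ i < k t, cycEntry L ((∑ s ∈ Finset.range t, k s) + i) = ρ t := by
    intro t ht i hi
    have hlt : (∑ s ∈ Finset.range t, k s) + i < n := by
      have h1 := Finset.sum_range_succ k t
      have h2 := hSle (t + 1) ht
      omega
    have key := getD_flatMap_range (fun s => List.replicate (k s) (ρ s)) d t ht i
      (by simpa using hi)
    simp only [List.length_replicate] at key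
    rw [cycEntry, ← hn, Nat.mod_eq_of_lt hlt, ← hLdef] at *
    rw [key, List.getD_eq_getElem _ _ (by simpa using hi), List.getElem_replicate]
  have hper : ∀ q c, cycEntry L (q + n * c) = cycEntry L q := by
    intro q c
    rw [cycEntry, cycEntry, ← hn, Nat.add_mul_mod_self_left]
  have hprev : ∀ t < d, (t + d - 1) % d < d ∧ ∃ c, (∑ s ∈ Finset.range t, k s) + n =
      (∑ s ∈ Finset.range ((t + d - 1) % d), k s) + k ((t + d - 1) % d) + n * c := by
    intro t ht
    refine ⟨Nat.mod_lt _ hd, ?_⟩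
    rcases Nat.eq_zero_or_pos t with rfl | htpos
    · have h1 : (0 + d - 1) % d = d - 1 := by rw [show 0 + d - 1 = d - 1 by omega]; exact Nat.mod_eq_of_lt (by omega)
      refine ⟨0, ?_⟩
      rw [h1]
      have h2 : ∑ s ∈ Finset.range d, k s = (∑ s ∈ Finset.range (d - 1), k s) + k (d - 1) := by
        conv_lhs => rw [show d = (d - 1) + 1 by omega]
        exact Finset.sum_range_succ k (d - 1)
      simp [hlen, h2]
    · have h1 : (t + d - 1) % d = t - 1 := by
        rw [show t + d - 1 = (t - 1) + d by omega, Nat.add_mod_right]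
        exact Nat.mod_eq_of_lt (by omega)
      refine ⟨1, ?_⟩
      rw [h1]
      have h2 : ∑ s ∈ Finset.range t, k s = (∑ s ∈ Finset.range (t - 1), k s) + k (t - 1) := by
        conv_lhs => rw [show t = (t - 1) + 1 by omega]
        exact Finset.sum_range_succ k (t - 1)
      omega
  -- Claim A: the ℓ-1 cyclic predecessors of the start of a "descending" block are ≥ its price
  have claimA : ∀ j, ∀ t < d, 1 ≤ j → j < ℓ → ρ t ≤ ρ ((t + d - 1) % d) →
      ρ t ≤ cycEntry L ((∑ s ∈ Finset.range t, k s) + n * ℓ - j) := by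
    intro j
    induction j using Nat.strong_induction_on with
    | _ j ih =>
      intro t ht hj1 hjl hmono
      obtain ⟨ht', c, hc⟩ := hprev t ht
      set t' := (t + d - 1) % d with ht'def
      have hkt' := hkpos t' ht'
      by_cases hjk : j ≤ k t'
      · have h2 : n * (c + ℓ - 1) + n = n * c + n * ℓ := by
          calc n * (c + ℓ - 1) + n = n * (c + ℓ - 1 + 1) := by ring
          _ = n * (c + ℓ) := by rw [show c + ℓ - 1 + 1 = c + ℓ by omega]
          _ = n * c + n * ℓ := by ring
        have hidx : (∑ s ∈ Finset.range t, k s) + n * ℓ - j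
            = ((∑ s ∈ Finset.range t', k s) + (k t' - j)) + n * (c + ℓ - 1) := by omega
        rw [hidx, hper, hE t' ht' _ (by omega)]
        exact hmono
      · have hk1 : k t' = 1 := by
          rcases hk t' ht' with h | h
          · exact h
          · omega
        have hstep : cycEntry L ((∑ s ∈ Finset.range t, k s) + n * ℓ - j)
            = cycEntry L ((∑ s ∈ Finset.range t', k s) + n * ℓ - (j - 1)) := by
          have e1 := hper ((∑ s ∈ Finset.range t, k s) + n * ℓ - j) 1
          have e2 := hper ((∑ s ∈ Finset.range t', k s) + n * ℓ - (j - 1)) c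
          rw [← e1, ← e2]
          congr 1
          have hn1 : n * 1 = n := by ring
          omega
        rw [hstep]
        exact le_trans hmono (ih (j - 1) (by omega) t' ht' (by omega) (by omega)
          (hdown t' ht' hk1))
  have reset : ∀ pos, (∀ j < ℓ, cycEntry L pos ≤ cycEntry L (pos + n * ℓ - j)) →
      IsResetPoint ℓ hℓ L pos := by
    intro pos h
    rw [IsResetPoint, ← hn]
    apply le_antisymm
    · exact Finset.le_inf' _ _ fun j hj => h j (Finset.mem_range.mp hj)
    · have h0 : cycEntry L (pos + n * ℓ - 0) = cycEntry L pos := by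
        rw [Nat.sub_zero]; exact hper pos ℓ
      calc (Finset.range ℓ).inf' _ (fun j => cycEntry L (pos + n * ℓ - j))
          ≤ cycEntry L (pos + n * ℓ - 0) :=
            Finset.inf'_le _ (Finset.mem_range.mpr hℓ)
        _ = cycEntry L pos := h0
  intro t ht
  have hkt := hkpos t ht
  have hSsucc : ∑ s ∈ Finset.range (t + 1), k s = (∑ s ∈ Finset.range t, k s) + k t :=
    Finset.sum_range_succ k t
  constructor
  · have hpos : (∑ s ∈ Finset.range (t + 1), k s) - 1
        = (∑ s ∈ Finset.range t, k s) + (k t - 1) := by omega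
    rw [hpos]
    apply reset
    intro j hj
    rw [hE t ht _ (by omega)]
    by_cases hjk : j ≤ k t - 1
    · have hidx : ((∑ s ∈ Finset.range t, k s) + (k t - 1)) + n * ℓ - j
          = ((∑ s ∈ Finset.range t, k s) + (k t - 1 - j)) + n * ℓ := by omega
      rw [hidx, show n * ℓ = n * ℓ from rfl]
      rw [hper, hE t ht _ (by omega)]
    · have hk1 : k t = 1 := by
        rcases hk t ht with h | h
        · exact h
        · omega
      have hidx : ((∑ s ∈ Finset.range t, k s) + (k t - 1)) + n * ℓ - j
          = (∑ s ∈ Finset.range t, k s) + n * ℓ - j := by omega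
      rw [hidx]
      exact claimA j t ht (by omega) hj (hdown t ht hk1)
  · intro hkl hmono i hi
    apply reset
    intro j hj
    rw [hE t ht i (by omega)]
    by_cases hji : j ≤ i
    · have hidx : ((∑ s ∈ Finset.range t, k s) + i) + n * ℓ - j
          = ((∑ s ∈ Finset.range t, k s) + (i - j)) + n * ℓ := by omega
      rw [hidx, hper, hE t ht _ (by omega)]
    · have hidx : ((∑ s ∈ Finset.range t, k s) + i) + n * ℓ - j
          = (∑ s ∈ Finset.range t, k s) + n * ℓ - (j - i) := by omega
      rw [hidx]
      exact claimA (j - i) t ht (by omega) (by omega) hmono
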